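/- Let λ ∈ F with λ + λ̄ = 1, let μ ∈ K with μ ≠ 0, and let a ∈ F with a ≠ 0 be such that Tr_m(a·ā) = 0. Then ∑_{x ∈ F} ε(Tr_n(λ·x^(2^m+1)) + Tr_n(μ·x^(2^m−1)) + Tr_n(a·x)) = 1 + k_m(μ). -/

import Mathlib

open Finset

/-- Absolute trace-style sum `Tr_n : F → F` for `n = 2m`. -/
def trN (m : ℕ) {F : Type*} [Field F] (x : F) : F :=
  ∑ i ∈ Finset.range (2 * m), x ^ (2 ^ i)

/-- Trace-style sum `Tr_m : F → F` (meant for elements of the subfield `K`). -/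
def trM (m : ℕ) {F : Type*} [Field F] (x : F) : F :=
  ∑ i ∈ Finset.range m, x ^ (2 ^ i)

/-- `ε(0) = 1`, `ε(t) = -1` for `t ≠ 0`. -/
def eps {F : Type*} [Field F] [DecidableEq F] (t : F) : ℤ :=
  if t = 0 then 1 else -1

/-- Kloosterman sum `k_m(μ) = ∑_{x ∈ K, x ≠ 0} χ_m(x + μ x⁻¹)`. -/
def klooM (m : ℕ) {F : Type*} [Field F] [Fintype F] [DecidableEq F] (μ : F) : ℤ :=
  ∑ x ∈ Finset.univ.filter (fun x : F => x ^ (2 ^ m) = x ∧ x ≠ 0),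
    eps (trM m (x + μ * x⁻¹))

/-- Kloosterman sum over the big field: `k_n(μ) = ∑_{x ∈ F, x ≠ 0} χ_n(x + μ x⁻¹)`. -/
def klooN (m : ℕ) {F : Type*} [Field F] [Fintype F] [DecidableEq F] (μ : F) : ℤ :=
  ∑ x ∈ Finset.univ.filter (fun x : F => x ≠ 0), eps (trN m (x + μ * x⁻¹))

/-- Walsh transform of `h : F → F` (with values in `{0,1}`) at `a`. -/
def walsh (m : ℕ) {F : Type*} [Field F] [Fintype F] [DecidableEq F] (h : F → F) (a : F) : ℤ :=
  ∑ x : F, eps (h x + trN m (a * x))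

/-- The Boolean function `f_{λ,μ}(x) = Tr_n(λ x^{2^m+1}) + Tr_n(x)·Tr_n(μ x^{2^m-1})`. -/
def fFun (m : ℕ) {F : Type*} [Field F] (l μ : F) : F → F :=
  fun x => trN m (l * x ^ (2 ^ m + 1)) + trN m x * trN m (μ * x ^ (2 ^ m - 1))

/-- The Boolean function
`g_{λ,μ}(x) = (1 + Tr_n(x))·Tr_n(λ x^{2^m+1}) + Tr_n(x)·Tr_n(μ x^{2^m-1})`. -/
def gFun (m : ℕ) {F : Type*} [Field F] (l μ : F) : F → F :=
  fun x => (1 + trN m x) * trN m (l * x ^ (2 ^ m + 1)) +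
    trN m x * trN m (μ * x ^ (2 ^ m - 1))

section Basic
variable {F : Type*} [Field F] [DecidableEq F]

lemma eps_zero : eps (0:F) = 1 := if_pos rfl

lemma sq01 {s : F} (h : s ^ 2 = s) : s = 0 ∨ s = 1 := by
  have h2 : s * (s - 1) = 0 := by rw [mul_sub, mul_one, ← sq, h, sub_self]
  rcases mul_eq_zero.1 h2 with h3 | h3
  · exact Or.inl h3
  · exact Or.inr (by linear_combination h3)

variable [CharP F 2]

lemma eps_add {s t : F} (hs : s ^ 2 = s) (ht : t ^ 2 = t) :
    eps (s + t) = eps s * eps t := by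
  rcases sq01 hs with rfl | rfl <;> rcases sq01 ht with rfl | rfl <;>
    simp [eps, CharTwo.add_self_eq_zero, one_ne_zero]

lemma eps_add_one {s : F} (hs : s ^ 2 = s) : eps (s + 1) = - eps s := by
  rw [eps_add hs (one_pow 2)]
  have : eps (1:F) = -1 := if_neg one_ne_zero
  rw [this, mul_neg_one]

lemma trM_zero (m : ℕ) : trM m (0 : F) = 0 := by
  apply Finset.sum_eq_zero
  intro i _
  exact zero_pow (by positivity)

lemma trM_add (m : ℕ) (x y : F) : trM m (x + y) = trM m x + trM m y := by
  haveI : Fact (Nat.Prime 2) := ⟨Nat.prime_two⟩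
  unfold trM
  rw [← Finset.sum_add_distrib]
  exact Finset.sum_congr rfl fun i _ => add_pow_char_pow x y 2 i

lemma trM_sq_shift (m : ℕ) (x : F) :
    trM m (x ^ 2) = trM m x + (x ^ 2 ^ m + x) := by
  unfold trM
  have h1 : ∀ i : ℕ, (x ^ 2) ^ 2 ^ i = x ^ 2 ^ (i + 1) := by
    intro i; rw [← pow_mul, ← pow_succ']
  rw [Finset.sum_congr rfl fun i _ => h1 i]
  have h2 : ∑ i ∈ Finset.range (m + 1), x ^ 2 ^ i
      = ∑ i ∈ Finset.range m, x ^ 2 ^ (i + 1) + x ^ 2 ^ 0 :=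
    Finset.sum_range_succ' _ _
  have h3 : ∑ i ∈ Finset.range (m + 1), x ^ 2 ^ i
      = ∑ i ∈ Finset.range m, x ^ 2 ^ i + x ^ 2 ^ m :=
    Finset.sum_range_succ _ _
  have h4 : ∑ i ∈ Finset.range m, x ^ 2 ^ (i + 1)
      = ∑ i ∈ Finset.range m, x ^ 2 ^ i + x ^ 2 ^ m - x ^ 2 ^ 0 := by
    rw [← h3, h2]; ring
  rw [h4, pow_zero, pow_one, CharTwo.sub_eq_add]
  ring

lemma trM_sq {m : ℕ} {x : F} (hx : x ^ 2 ^ m = x) : trM m (x ^ 2) = trM m x := by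
  rw [trM_sq_shift, hx, CharTwo.add_self_eq_zero, add_zero]

lemma trM_is01 {m : ℕ} {x : F} (hx : x ^ 2 ^ m = x) :
    (trM m x) ^ 2 = trM m x := by
  haveI : Fact (Nat.Prime 2) := ⟨Nat.prime_two⟩
  have : (trM m x) ^ 2 = trM m (x ^ 2) := by
    unfold trM
    rw [sum_pow_char]
    exact Finset.sum_congr rfl fun i _ => by rw [← pow_mul, ← pow_mul, mul_comm]
  rw [this, trM_sq hx]

lemma trN_eq_trM2 (m : ℕ) (x : F) : trN m x = trM (2 * m) x := rfl

lemma trN_eq (m : ℕ) (x : F) : trN m x = trM m (x + x ^ 2 ^ m) := by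
  haveI : Fact (Nat.Prime 2) := ⟨Nat.prime_two⟩
  unfold trN trM
  rw [two_mul, Finset.sum_range_add]
  have h1 : ∀ i, x ^ 2 ^ (m + i) = (x ^ 2 ^ m) ^ 2 ^ i := by
    intro i; rw [← pow_mul, ← pow_add]
  have h2 : ∀ i ∈ Finset.range m, (x + x ^ 2 ^ m) ^ 2 ^ i
      = x ^ 2 ^ i + (x ^ 2 ^ m) ^ 2 ^ i := fun i _ => add_pow_char_pow _ _ 2 i
  rw [Finset.sum_congr rfl h2, Finset.sum_add_distrib]
  exact congrArg _ (Finset.sum_congr rfl fun i _ => h1 i)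

end Basic

section Counting
variable {F : Type*} [Field F] [DecidableEq F] [Fintype F] [CharP F 2]

lemma card_trM_zero_le {k : ℕ} (hk : 0 < k) :
    (Finset.univ.filter fun x : F => trM k x = 0).card ≤ 2 ^ (k - 1) := by
  obtain ⟨j, rfl⟩ : ∃ j, k = j + 1 := ⟨k - 1, by omega⟩
  set P : Polynomial F := ∑ i ∈ Finset.range (j + 1), Polynomial.X ^ (2 ^ i) with hP
  have heval : ∀ x : F, P.eval x = trM (j + 1) x := by
    intro x; simp [hP, trM, Polynomial.eval_finset_sum]
  have hdeg : P.natDegree = 2 ^ j := by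
    rw [hP, Finset.sum_range_succ]
    have h1 : (∑ i ∈ Finset.range j, (Polynomial.X : Polynomial F) ^ (2 ^ i)).natDegree < 2 ^ j := by
      apply lt_of_le_of_lt (Polynomial.natDegree_sum_le_of_forall_le _ _ ?_)
        (show 2 ^ j - 1 < 2 ^ j by have := Nat.one_le_two_pow (n := j); omega)
      intro i hi
      rw [Polynomial.natDegree_X_pow]
      have : 2 ^ i < 2 ^ j := Nat.pow_lt_pow_right one_lt_two (Finset.mem_range.1 hi)
      omega
    rw [Polynomial.natDegree_add_eq_right_of_natDegree_lt (by rwa [Polynomial.natDegree_X_pow]),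
      Polynomial.natDegree_X_pow]
  have hP0 : P ≠ 0 := by
    intro h
    rw [h, Polynomial.natDegree_zero] at hdeg
    have := Nat.one_le_two_pow (n := j)
    omega
  have hsub : (Finset.univ.filter fun x : F => trM (j + 1) x = 0) ⊆ P.roots.toFinset := by
    intro x hx
    rw [Multiset.mem_toFinset, Polynomial.mem_roots']
    exact ⟨hP0, by rw [Polynomial.IsRoot, heval]; exact (Finset.mem_filter.1 hx).2⟩
  calc (Finset.univ.filter fun x : F => trM (j + 1) x = 0).card
      ≤ P.roots.toFinset.card := Finset.card_le_card hsub
    _ ≤ Multiset.card P.roots := Multiset.toFinset_card_le _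
    _ ≤ P.natDegree := P.card_roots'
    _ = 2 ^ j := hdeg
    _ = 2 ^ (j + 1 - 1) := by norm_num

lemma hom_card (f : F →+ F) : Nat.card f.ker * Nat.card f.range = Fintype.card F := by
  rw [← AddSubgroup.index_ker, AddSubgroup.card_mul_index, Nat.card_eq_fintype_card]

variable {m : ℕ}

lemma pow_card_fix (hcard : Fintype.card F = 2 ^ (2 * m)) (x : F) :
    x ^ 2 ^ (2 * m) = x := by
  rw [← hcard]; exact FiniteField.pow_card x

lemma pow_pow_fix (hcard : Fintype.card F = 2 ^ (2 * m)) (x : F) :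
    (x ^ 2 ^ m) ^ 2 ^ m = x := by
  rw [← pow_mul, ← pow_add, ← two_mul]; exact pow_card_fix hcard x

lemma exists_K_trM_one (hm : 0 < m) (hcard : Fintype.card F = 2 ^ (2 * m)) :
    ∃ z : F, z ^ 2 ^ m = z ∧ trM m z = 1 := by
  haveI : Fact (Nat.Prime 2) := ⟨Nat.prime_two⟩
  set ψ : F →+ F := AddMonoidHom.mk' (fun x : F => x ^ 2 ^ m + x)
    (fun x y => by rw [add_pow_char_pow x y 2 m]; ring) with hψ
  have hker : (ψ.ker : Set F) = {x : F | x ^ 2 ^ m = x} := by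
    ext x
    simp only [SetLike.mem_coe, AddMonoidHom.mem_ker, Set.mem_setOf_eq]
    show x ^ 2 ^ m + x = 0 ↔ _
    rw [add_eq_zero_iff_eq_neg, CharTwo.neg_eq]
  have hrange : (ψ.range : Set F) ⊆ {x : F | x ^ 2 ^ m = x} := by
    rintro y ⟨x, rfl⟩
    show (x ^ 2 ^ m + x) ^ 2 ^ m = x ^ 2 ^ m + x
    rw [add_pow_char_pow _ _ 2 m, pow_pow_fix hcard, add_comm]
  have hcards := hom_card ψ
  set nK := ({x : F | x ^ 2 ^ m = x}).ncard with hnK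
  have h1 : Nat.card ψ.ker = nK := by
    rw [hnK, ← hker, ← Nat.card_coe_set_eq]; rfl
  have h2 : Nat.card ψ.range ≤ nK := by
    calc Nat.card ψ.range = ((ψ.range : Set F)).ncard := by
          rw [← Nat.card_coe_set_eq]; rfl
      _ ≤ nK := Set.ncard_le_ncard hrange (Set.toFinite _)
  have hKge : 2 ^ m ≤ nK := by
    by_contra hlt
    push_neg at hlt
    have : Fintype.card F < 2 ^ m * 2 ^ m := by
      calc Fintype.card F = Nat.card ψ.ker * Nat.card ψ.range := hcards.symm
        _ ≤ nK * nK := Nat.mul_le_mul (le_of_eq h1) h2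
        _ < 2 ^ m * 2 ^ m := Nat.mul_lt_mul'' hlt hlt
    rw [hcard, ← pow_add, ← two_mul] at this
    exact lt_irrefl _ this
  -- convert to Finset
  have hKfin : nK = (Finset.univ.filter fun x : F => x ^ 2 ^ m = x).card := by
    rw [hnK]
    rw [show {x : F | x ^ 2 ^ m = x} = ↑(Finset.univ.filter fun x : F => x ^ 2 ^ m = x) by
      ext x; simp]
    exact Set.ncard_coe_finset _
  have hZ : (Finset.univ.filter fun x : F => trM m x = 0).card < 
      (Finset.univ.filter fun x : F => x ^ 2 ^ m = x).card := by
    calc (Finset.univ.filter fun x : F => trM m x = 0).card ≤ 2 ^ (m - 1) := card_trM_zero_le hm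
      _ < 2 ^ m := Nat.pow_lt_pow_right one_lt_two (by omega)
      _ ≤ _ := by rw [← hKfin]; exact hKge
  obtain ⟨z, hz1, hz2⟩ := Finset.not_subset.1 fun hsub => absurd (Finset.card_le_card hsub) (not_le.2 hZ)
  refine ⟨z, (Finset.mem_filter.1 hz1).2, ?_⟩
  have hz3 : trM m z ≠ 0 := fun h => hz2 (Finset.mem_filter.2 ⟨Finset.mem_univ _, h⟩)
  rcases sq01 (trM_is01 (Finset.mem_filter.1 hz1).2) with h | h
  · exact absurd h hz3
  · exact h

lemma artin_schreier (hm : 0 < m) (hcard : Fintype.card F = 2 ^ (2 * m))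
    {c : F} (hc : c ^ 2 ^ m = c) : ∃ z : F, z ^ 2 + z = c := by
  haveI : Fact (Nat.Prime 2) := ⟨Nat.prime_two⟩
  have h2 : (2 : F) = 0 := CharTwo.two_eq_zero
  set ψ : F →+ F := AddMonoidHom.mk' (fun x : F => x ^ 2 + x)
    (fun x y => by
      have h3 : (x + y) ^ 2 = x ^ 2 + y ^ 2 + 2 * (x * y) := by ring
      rw [h3, h2]; ring) with hψ
  have hker : (ψ.ker : Set F) = {0, 1} := by
    ext x
    simp only [SetLike.mem_coe, AddMonoidHom.mem_ker,
      Set.mem_insert_iff, Set.mem_singleton_iff]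
    show x ^ 2 + x = 0 ↔ _
    constructor
    · intro h
      have : x * (x + 1) = 0 := by rw [mul_add, mul_one, ← sq]; linear_combination h
      rcases mul_eq_zero.1 this with h' | h'
      · exact Or.inl h'
      · right
        have := add_eq_zero_iff_eq_neg.1 h'
        rwa [CharTwo.neg_eq] at this
    · rintro (rfl | rfl) <;> simp [h2]; exact CharTwo.add_self_eq_zero 1
  have hkcard : Nat.card ψ.ker = 2 := by
    have : Nat.card ψ.ker = ((ψ.ker : Set F)).ncard := by
      rw [← Nat.card_coe_set_eq]; rfl
    rw [this, hker, Set.ncard_pair (zero_ne_one)]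
  have hcards := hom_card ψ
  rw [hkcard, hcard] at hcards
  have hrcard : Nat.card ψ.range = 2 ^ (2 * m - 1) := by
    have h2m : 2 ^ (2 * m) = 2 * 2 ^ (2 * m - 1) := by
      rw [← pow_succ']
      congr 1
      omega
    omega
  -- range ⊆ zeros of trM (2m)
  have hq2 := pow_card_fix hcard
  have hrsub : (ψ.range : Set F) ⊆ {x : F | trM (2 * m) x = 0} := by
    rintro y ⟨x, rfl⟩
    show trM (2 * m) (x ^ 2 + x) = 0
    have h4 : ∀ a b : F, (a + (b + b)) + a = 0 := fun a b => by
      rw [CharTwo.add_self_eq_zero b, add_zero, CharTwo.add_self_eq_zero]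
    rw [trM_add, trM_sq_shift, hq2 x]
    exact h4 _ _
  -- Finsets
  have hfin : (ψ.range : Set F).Finite := Set.toFinite _
  have hsub2 : hfin.toFinset ⊆ Finset.univ.filter fun x : F => trM (2 * m) x = 0 := by
    intro x hx
    rw [Set.Finite.mem_toFinset] at hx
    exact Finset.mem_filter.2 ⟨Finset.mem_univ _, hrsub hx⟩
  have hcard2 : hfin.toFinset.card = 2 ^ (2 * m - 1) := by
    rw [← Set.ncard_eq_toFinset_card _ hfin, ← Nat.card_coe_set_eq]
    rw [← hrcard]; rfl
  have heq : hfin.toFinset = Finset.univ.filter fun x : F => trM (2 * m) x = 0 := by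
    apply Finset.eq_of_subset_of_card_le hsub2
    rw [hcard2]
    exact card_trM_zero_le (by omega)
  have hcmem : c ∈ Finset.univ.filter fun x : F => trM (2 * m) x = 0 := by
    refine Finset.mem_filter.2 ⟨Finset.mem_univ _, ?_⟩
    have : trM (2 * m) c = trM m (c + c ^ 2 ^ m) := trN_eq m c
    rw [this, hc, CharTwo.add_self_eq_zero, trM_zero]
  rw [← heq, Set.Finite.mem_toFinset] at hcmem
  obtain ⟨z, hz⟩ := hcmem
  exact ⟨z, by simpa [ψ] using hz⟩

end Counting

section CharSum
variable {F : Type*} [Field F] [DecidableEq F] [Fintype F] [CharP F 2] {m : ℕ}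

lemma charsum (hm : 0 < m) (hcard : Fintype.card F = 2 ^ (2 * m))
    {c : F} (hc : c ^ 2 ^ m = c) (hc0 : c ≠ 0) :
    ∑ y ∈ Finset.univ.filter (fun y : F => y ^ 2 ^ m = y), eps (trM m (c * y)) = 0 := by
  have step1 : ∑ y ∈ Finset.univ.filter (fun y : F => y ^ 2 ^ m = y), eps (trM m (c * y))
      = ∑ z ∈ Finset.univ.filter (fun y : F => y ^ 2 ^ m = y), eps (trM m z) := by
    refine Finset.sum_nbij' (fun y => c * y) (fun z => c⁻¹ * z) ?_ ?_ ?_ ?_ ?_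
    · intro y hy
      rw [Finset.mem_filter] at *
      exact ⟨Finset.mem_univ _, by rw [mul_pow, hc, hy.2]⟩
    · intro z hz
      rw [Finset.mem_filter] at *
      exact ⟨Finset.mem_univ _, by rw [mul_pow, inv_pow, hc, hz.2]⟩
    · intro y _; field_simp
    · intro z _; field_simp
    · intro y _; rfl
  rw [step1]
  obtain ⟨z₀, hz₀K, hz₀⟩ := exists_K_trM_one hm hcard
  have step2 : ∑ z ∈ Finset.univ.filter (fun y : F => y ^ 2 ^ m = y), eps (trM m (z + z₀))
      = ∑ z ∈ Finset.univ.filter (fun y : F => y ^ 2 ^ m = y), eps (trM m z) := by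
    refine Finset.sum_nbij' (fun z => z + z₀) (fun z => z + z₀) ?_ ?_ ?_ ?_ ?_
    · intro y hy
      rw [Finset.mem_filter] at *
      refine ⟨Finset.mem_univ _, ?_⟩
      haveI : Fact (Nat.Prime 2) := ⟨Nat.prime_two⟩
      rw [add_pow_char_pow _ _ 2 m, hy.2, hz₀K]
    · intro y hy
      rw [Finset.mem_filter] at *
      refine ⟨Finset.mem_univ _, ?_⟩
      haveI : Fact (Nat.Prime 2) := ⟨Nat.prime_two⟩
      rw [add_pow_char_pow _ _ 2 m, hy.2, hz₀K]
    · intro y _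
      rw [add_assoc, CharTwo.add_self_eq_zero, add_zero]
    · intro y _
      rw [add_assoc, CharTwo.add_self_eq_zero, add_zero]
    · intro y _; rfl
  have step3 : ∑ z ∈ Finset.univ.filter (fun y : F => y ^ 2 ^ m = y), eps (trM m (z + z₀))
      = ∑ z ∈ Finset.univ.filter (fun y : F => y ^ 2 ^ m = y), -eps (trM m z) :=
    Finset.sum_congr rfl (fun z hz => by
      rw [trM_add, hz₀, eps_add_one (trM_is01 (Finset.mem_filter.1 hz).2)])
  rw [step3, Finset.sum_neg_distrib] at step2
  linarith

lemma charsum' (hm : 0 < m) (hcard : Fintype.card F = 2 ^ (2 * m))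
    {c : F} (hc : c ^ 2 ^ m = c) (hc0 : c ≠ 0) :
    ∑ y ∈ Finset.univ.filter (fun y : F => y ^ 2 ^ m = y ∧ y ≠ 0),
      eps (trM m (c * y)) = -1 := by
  have h0 : (Finset.univ.filter (fun y : F => y ^ 2 ^ m = y ∧ y ≠ 0)) =
      (Finset.univ.filter (fun y : F => y ^ 2 ^ m = y)).erase 0 := by
    ext y
    simp only [Finset.mem_filter, Finset.mem_erase, Finset.mem_univ, true_and]
    tauto
  rw [h0]
  have h1 : (0 : F) ∈ Finset.univ.filter (fun y : F => y ^ 2 ^ m = y) := by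
    simp [zero_pow (by positivity : (2:ℕ) ^ m ≠ 0)]
  have h2 := Finset.add_sum_erase _ (fun y => eps (trM m (c * y))) h1
  rw [charsum hm hcard hc hc0] at h2
  have h3 : eps (trM m (c * 0)) = 1 := by rw [mul_zero, trM_zero, eps_zero]
  simp only [h3] at h2
  linarith

end CharSum

section Circle
variable {F : Type*} [Field F] [DecidableEq F] [Fintype F] [CharP F 2] {m : ℕ}

lemma U_ne_zero {v : F} (hv : v ^ (2 ^ m + 1) = 1) : v ≠ 0 := by
  intro h
  rw [h, zero_pow (by positivity)] at hv
  exact zero_ne_one hv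

lemma U_pow_q {v : F} (hv : v ^ (2 ^ m + 1) = 1) : v ^ 2 ^ m = v⁻¹ := by
  rw [pow_succ] at hv
  exact eq_inv_of_mul_eq_one_left hv

lemma K_eq_one_of_U {u : F} (huU : u ^ (2 ^ m + 1) = 1) (huK : u ^ 2 ^ m = u) : u = 1 := by
  have h1 : u * u = 1 := by
    calc u * u = u ^ 2 ^ m * u := by rw [huK]
      _ = 1 := by rw [← pow_succ]; exact huU
  have h2 : (u + 1) ^ 2 = 0 := by
    have h2' : (2:F) = 0 := CharTwo.two_eq_zero
    linear_combination h1 + (u + 1) * h2'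
  have := pow_eq_zero_iff (n := 2) (by norm_num) |>.1 h2
  have := add_eq_zero_iff_eq_neg.1 this
  rwa [CharTwo.neg_eq] at this

lemma fiber_card (hm : 0 < m) (hcard : Fintype.card F = 2 ^ (2 * m))
    {t : F} (ht : t ^ 2 ^ m = t) (ht0 : t ≠ 0) :
    (((Finset.univ.filter (fun v : F => v ^ (2 ^ m + 1) = 1)).erase 1).filter
      (fun u => u + u⁻¹ = t)).card = if trM m t⁻¹ = 0 then 0 else 2 := by
  haveI : Fact (Nat.Prime 2) := ⟨Nat.prime_two⟩
  have h2 : (2 : F) = 0 := CharTwo.two_eq_zero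
  have htinvK : (t⁻¹) ^ 2 ^ m = t⁻¹ := by rw [inv_pow, ht]
  have hti2 : t ^ 2 * (t⁻¹) ^ 2 = 1 := by
    rw [← mul_pow, mul_inv_cancel₀ ht0, one_pow]
  obtain ⟨z, hz⟩ := artin_schreier hm hcard
    (show ((t⁻¹) ^ 2) ^ 2 ^ m = (t⁻¹) ^ 2 by rw [← pow_mul, mul_comm, pow_mul, htinvK])
  have hδ : trM m t⁻¹ = z ^ 2 ^ m + z := by
    rw [← trM_sq htinvK, ← hz, trM_add, trM_sq_shift]
    ring_nf
    rw [show trM m z * 2 = 0 by rw [h2, mul_zero]]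
    ring
  -- quadratic facts shared by both cases
  have hquad : ∀ u : F, u ^ (2 ^ m + 1) = 1 → u + u⁻¹ = t →
      u = t * z ∨ u = t * z + t := by
    intro u huU hg
    have hu0 : u ≠ 0 := U_ne_zero huU
    have h5 : t * u = u ^ 2 + 1 := by
      rw [← hg, add_mul, inv_mul_cancel₀ hu0, sq]
    have hfac : (u + t * z) * (u + (t * z + t)) = 0 := by
      linear_combination (t * z * u + u ^ 2 + 1) * h2 + t ^ 2 * hz + h5 + hti2
    rcases mul_eq_zero.1 hfac with h' | h'
    · left
      have := add_eq_zero_iff_eq_neg.1 h'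
      rwa [CharTwo.neg_eq] at this
    · right
      have := add_eq_zero_iff_eq_neg.1 h'
      rwa [CharTwo.neg_eq] at this
  by_cases h0 : trM m t⁻¹ = 0
  · rw [if_pos h0, Finset.card_eq_zero, Finset.eq_empty_iff_forall_notMem]
    intro u hu
    rw [Finset.mem_filter, Finset.mem_erase, Finset.mem_filter] at hu
    obtain ⟨⟨hu1, _, huU⟩, hg⟩ := hu
    have hzK : z ^ 2 ^ m = z := by
      rw [h0] at hδ
      have := add_eq_zero_iff_eq_neg.1 hδ.symm
      rwa [CharTwo.neg_eq] at this
    have huK : u ^ 2 ^ m = u := by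
      rcases hquad u huU hg with rfl | rfl
      · rw [mul_pow, ht, hzK]
      · rw [add_pow_char_pow _ _ 2 m, mul_pow, ht, hzK]
    exact hu1 (K_eq_one_of_U huU huK)
  · rw [if_neg h0]
    have hδ1 : z ^ 2 ^ m + z = 1 := by
      rcases sq01 (trM_is01 htinvK) with h | h
      · exact absurd h h0
      · rw [← hδ, h]
    have hzq : z ^ 2 ^ m = z + 1 := by linear_combination hδ1 - z * h2
    have hz0 : z ≠ 0 := by
      intro h
      rw [h] at hz
      have : (t⁻¹) ^ 2 = 0 := by rw [← hz]; norm_num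
      exact inv_ne_zero ht0 (pow_eq_zero_iff (two_ne_zero) |>.1 this)
    have hU1 : (t * z) ^ (2 ^ m + 1) = 1 := by
      rw [pow_succ, mul_pow, ht, hzq]
      linear_combination t ^ 2 * hz + hti2
    have hU1inv : (t * z)⁻¹ = t * z + t := by
      have hmul : (t * z + t) * (t * z) = 1 := by
        linear_combination t ^ 2 * hz + hti2
      exact (eq_inv_of_mul_eq_one_left hmul).symm
    have hU2 : (t * z + t) ^ (2 ^ m + 1) = 1 := by
      rw [pow_succ, add_pow_char_pow _ _ 2 m, mul_pow, ht, hzq]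
      linear_combination t ^ 2 * hz + hti2 + (t ^ 2 * z + t ^ 2) * h2
    have hU2inv : (t * z + t)⁻¹ = t * z := by
      have hmul : (t * z) * (t * z + t) = 1 := by
        linear_combination t ^ 2 * hz + hti2
      exact (eq_inv_of_mul_eq_one_left hmul).symm
    have hne1 : t * z ≠ 1 := by
      intro h
      have hz' : z = t⁻¹ := eq_inv_of_mul_eq_one_right (by linear_combination h)
      rw [hz', htinvK] at hzq
      exact one_ne_zero (by linear_combination -hzq)
    have hne2 : t * z + t ≠ 1 := by
      intro h
      have h' : t * (z + 1) = 1 := by rw [mul_add, mul_one]; exact h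
      have hz' : z + 1 = t⁻¹ := eq_inv_of_mul_eq_one_right (by linear_combination h')
      have e : (z + 1) ^ 2 ^ m = z := by
        rw [add_pow_char_pow _ _ 2 m, one_pow, hzq, add_assoc, CharTwo.add_self_eq_zero,
          add_zero]
      rw [hz', htinvK] at e
      exact one_ne_zero (by linear_combination hz'.trans e)
    have hset : ((Finset.univ.filter (fun v : F => v ^ (2 ^ m + 1) = 1)).erase 1).filter
        (fun u => u + u⁻¹ = t) = {t * z, t * z + t} := by
      ext u
      simp only [Finset.mem_filter, Finset.mem_erase, Finset.mem_univ, true_and,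
        Finset.mem_insert, Finset.mem_singleton]
      constructor
      · rintro ⟨⟨_, huU⟩, hg⟩
        exact hquad u huU hg
      · rintro (rfl | rfl)
        · exact ⟨⟨hne1, hU1⟩, by rw [hU1inv]; linear_combination (t * z) * h2⟩
        · exact ⟨⟨hne2, hU2⟩, by rw [hU2inv]; linear_combination (t * z) * h2⟩
    rw [hset]
    exact Finset.card_pair (by intro h; exact ht0 (by linear_combination h.symm))

end Circle

section UsumSec
variable {F : Type*} [Field F] [DecidableEq F] [Fintype F] [CharP F 2] {m : ℕ}

lemma Usum (hm : 0 < m) (hcard : Fintype.card F = 2 ^ (2 * m))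
    {μ : F} (hμK : μ ^ 2 ^ m = μ) (hμ0 : μ ≠ 0) :
    ∑ v ∈ Finset.univ.filter (fun v : F => v ^ (2 ^ m + 1) = 1),
      eps (trM m (μ * (v + v⁻¹))) = - klooM m μ := by
  haveI : Fact (Nat.Prime 2) := ⟨Nat.prime_two⟩
  have h1U : (1:F) ∈ Finset.univ.filter (fun v : F => v ^ (2 ^ m + 1) = 1) := by simp
  have hsplit := Finset.add_sum_erase _ (fun v : F => eps (trM m (μ * (v + v⁻¹)))) h1U
  have hterm1 : eps (trM m (μ * ((1:F) + 1⁻¹))) = 1 := by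
    rw [inv_one, CharTwo.add_self_eq_zero, mul_zero, trM_zero, eps_zero]
  have hmaps : ∀ u ∈ (Finset.univ.filter (fun v : F => v ^ (2 ^ m + 1) = 1)).erase 1,
      u + u⁻¹ ∈ Finset.univ.filter (fun x : F => x ^ 2 ^ m = x ∧ x ≠ 0) := by
    intro u hu
    rw [Finset.mem_erase, Finset.mem_filter] at hu
    obtain ⟨hu1, _, huU⟩ := hu
    refine Finset.mem_filter.2 ⟨Finset.mem_univ _, ?_, ?_⟩
    · rw [add_pow_char_pow _ _ 2 m, U_pow_q huU, inv_pow, U_pow_q huU, inv_inv, add_comm]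
    · intro h
      have hinv : u = u⁻¹ := by
        have := add_eq_zero_iff_eq_neg.1 h
        rwa [CharTwo.neg_eq] at this
      have huK : u ^ 2 ^ m = u := by rw [U_pow_q huU, ← hinv]
      exact hu1 (K_eq_one_of_U huU huK)
  have hfib := Finset.sum_fiberwise_of_maps_to' hmaps (fun t => eps (trM m (μ * t)))
  have hinner : ∀ t ∈ Finset.univ.filter (fun x : F => x ^ 2 ^ m = x ∧ x ≠ 0),
      (∑ _u ∈ ((Finset.univ.filter (fun v : F => v ^ (2 ^ m + 1) = 1)).erase 1).filter
        (fun u => u + u⁻¹ = t), eps (trM m (μ * t)))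
      = (1 - eps (trM m t⁻¹)) * eps (trM m (μ * t)) := by
    intro t ht
    rw [Finset.mem_filter] at ht
    rw [Finset.sum_const, fiber_card hm hcard ht.2.1 ht.2.2]
    by_cases h : trM m t⁻¹ = 0
    · rw [if_pos h, h, eps_zero, zero_smul]
      ring
    · rw [if_neg h]
      have he : eps (trM m t⁻¹) = -1 := if_neg h
      rw [he, nsmul_eq_mul]
      push_cast
      ring
  rw [Finset.sum_congr rfl hinner] at hfib
  have hsub : ∑ t ∈ Finset.univ.filter (fun x : F => x ^ 2 ^ m = x ∧ x ≠ 0),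
        (1 - eps (trM m t⁻¹)) * eps (trM m (μ * t))
      = (∑ t ∈ Finset.univ.filter (fun x : F => x ^ 2 ^ m = x ∧ x ≠ 0),
          eps (trM m (μ * t)))
        - ∑ t ∈ Finset.univ.filter (fun x : F => x ^ 2 ^ m = x ∧ x ≠ 0),
            eps (trM m t⁻¹) * eps (trM m (μ * t)) := by
    rw [← Finset.sum_sub_distrib]
    exact Finset.sum_congr rfl fun t _ => by ring
  have hS1 : ∑ t ∈ Finset.univ.filter (fun x : F => x ^ 2 ^ m = x ∧ x ≠ 0),
      eps (trM m (μ * t)) = -1 := charsum' hm hcard hμK hμ0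
  have hS2 : ∑ t ∈ Finset.univ.filter (fun x : F => x ^ 2 ^ m = x ∧ x ≠ 0),
      eps (trM m t⁻¹) * eps (trM m (μ * t)) = klooM m μ := by
    have hpoint : ∀ t ∈ Finset.univ.filter (fun x : F => x ^ 2 ^ m = x ∧ x ≠ 0),
        eps (trM m t⁻¹) * eps (trM m (μ * t)) = eps (trM m t⁻¹ + trM m (μ * t)) := by
      intro t ht
      rw [Finset.mem_filter] at ht
      obtain ⟨_, htK, ht0⟩ := ht
      have h1 : (t⁻¹) ^ 2 ^ m = t⁻¹ := by rw [inv_pow, htK]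
      have h2 : (μ * t) ^ 2 ^ m = μ * t := by rw [mul_pow, hμK, htK]
      rw [eps_add (trM_is01 h1) (trM_is01 h2)]
    rw [Finset.sum_congr rfl hpoint]
    unfold klooM
    refine Finset.sum_nbij' (fun t => μ * t) (fun x => μ⁻¹ * x) ?_ ?_ ?_ ?_ ?_
    · intro t htm
      simp only [Finset.mem_filter, Finset.mem_univ, true_and] at *
      exact ⟨by rw [mul_pow, hμK, htm.1], mul_ne_zero hμ0 htm.2⟩
    · intro x hxm
      simp only [Finset.mem_filter, Finset.mem_univ, true_and] at *
      have hμinv : μ⁻¹ ^ 2 ^ m = μ⁻¹ := by rw [inv_pow, hμK]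
      exact ⟨by rw [mul_pow, hμinv, hxm.1], mul_ne_zero (inv_ne_zero hμ0) hxm.2⟩
    · intro t _
      rw [← mul_assoc, inv_mul_cancel₀ hμ0, one_mul]
    · intro x _
      rw [← mul_assoc, mul_inv_cancel₀ hμ0, one_mul]
    · intro t htm
      simp only [Finset.mem_filter, Finset.mem_univ, true_and] at htm
      have h3 : μ * (μ * t)⁻¹ = t⁻¹ := by
        rw [mul_inv_rev, ← mul_assoc, mul_comm μ t⁻¹, mul_assoc, mul_inv_cancel₀ hμ0, mul_one]
      rw [← trM_add]
      congr 1
      rw [h3, add_comm]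
  rw [← hsplit]
  rw [hterm1, ← hfib, hsub, hS1, hS2]
  ring

end UsumSec

section Main
variable {F : Type*} [Field F] [DecidableEq F] [Fintype F] [CharP F 2] {m : ℕ}

lemma trM_artin (w : F) : trM m (w ^ 2 + w) = w ^ 2 ^ m + w := by
  have h2 : (2 : F) = 0 := CharTwo.two_eq_zero
  rw [trM_add, trM_sq_shift]
  linear_combination (trM m w) * h2

lemma d_ne_zero (hm : 0 < m) {a v : F} (ha : a ≠ 0)
    (haq : (a ^ 2 ^ m) ^ 2 ^ m = a)
    (haTr : trM m (a * a ^ 2 ^ m) = 0)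
    (hvU : v ^ (2 ^ m + 1) = 1) : 1 + (a * v + a ^ 2 ^ m * v⁻¹) ≠ 0 := by
  intro h
  have hv0 : v ≠ 0 := U_ne_zero hvU
  have hvq : v ^ 2 ^ m = v⁻¹ := U_pow_q hvU
  have h2 : (2 : F) = 0 := CharTwo.two_eq_zero
  have hvv : v * v⁻¹ = 1 := mul_inv_cancel₀ hv0
  have hrel : a * v + a ^ 2 ^ m * v⁻¹ = 1 := by linear_combination h - h2
  have hw : (a * v) ^ 2 + (a * v) = a * a ^ 2 ^ m := by
    linear_combination (a * v) * hrel - (a * a ^ 2 ^ m) * hvv + (a * v - a * a ^ 2 ^ m) * h2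
  have htr : trM m (a * a ^ 2 ^ m) = (a * v) ^ 2 ^ m + a * v := by
    rw [← hw, trM_artin]
  have hq : (a * v) ^ 2 ^ m = a ^ 2 ^ m * v⁻¹ := by rw [mul_pow, hvq]
  have : (0 : F) = 1 := by rw [← haTr, htr, hq]; linear_combination hrel
  exact one_ne_zero this.symm

lemma point_eq (hm : 0 < m) (hcard : Fintype.card F = 2 ^ (2 * m))
    {l μ a : F} (hl : l + l ^ 2 ^ m = 1) (hμK : μ ^ 2 ^ m = μ)
    {v y : F} (hvU : v ^ (2 ^ m + 1) = 1) (hyK : y ^ 2 ^ m = y) (hy0 : y ≠ 0) :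
    eps (trN m (l * (y * v) ^ (2 ^ m + 1)) + trN m (μ * (y * v) ^ (2 ^ m - 1)) +
      trN m (a * (y * v)))
    = eps (trM m (μ * (v ^ 2 + (v ^ 2)⁻¹))) *
      eps (trM m ((1 + (a * v + a ^ 2 ^ m * v⁻¹)) * y)) := by
  haveI : Fact (Nat.Prime 2) := ⟨Nat.prime_two⟩
  have h2 : (2 : F) = 0 := CharTwo.two_eq_zero
  have hv0 : v ≠ 0 := U_ne_zero hvU
  have hvq : v ^ 2 ^ m = v⁻¹ := U_pow_q hvU
  have hx0 : y * v ≠ 0 := mul_ne_zero hy0 hv0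
  have hinvq : (v⁻¹) ^ 2 ^ m = v := by rw [inv_pow, hvq, inv_inv]
  -- power computations
  have e1 : (y * v) ^ (2 ^ m + 1) = y ^ 2 := by
    rw [mul_pow, hvU, mul_one, pow_succ, hyK, ← sq]
  have epow : (y * v) ^ 2 ^ m = y * v⁻¹ := by rw [mul_pow, hyK, hvq]
  have e2 : (y * v) ^ (2 ^ m - 1) = (v ^ 2)⁻¹ := by
    have hpow : (y * v) ^ 2 ^ m = (y * v) ^ (2 ^ m - 1) * (y * v) := by
      rw [← pow_succ]
      congr 1
      have := Nat.one_le_two_pow (n := m)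
      omega
    have h' : (y * v) ^ (2 ^ m - 1) = (y * v) ^ 2 ^ m * (y * v)⁻¹ := by
      rw [hpow, mul_assoc, mul_inv_cancel₀ hx0, mul_one]
    rw [h', epow]
    field_simp
  -- trace computations
  have T1 : trN m (l * (y * v) ^ (2 ^ m + 1)) = trM m y := by
    rw [e1, trN_eq]
    have hly : l * y ^ 2 + (l * y ^ 2) ^ 2 ^ m = y ^ 2 := by
      have hy2 : (y ^ 2) ^ 2 ^ m = y ^ 2 := by
        rw [← pow_mul, mul_comm, pow_mul, hyK]
      rw [mul_pow, hy2]
      linear_combination (y ^ 2) * hl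
    rw [hly, trM_sq hyK]
  have T2 : trN m (μ * (y * v) ^ (2 ^ m - 1)) = trM m (μ * (v ^ 2 + (v ^ 2)⁻¹)) := by
    rw [e2, trN_eq]
    congr 1
    have hv2 : ((v ^ 2)⁻¹) ^ 2 ^ m = v ^ 2 := by
      rw [inv_pow, ← pow_mul, mul_comm, pow_mul, hvq, inv_pow, inv_inv]
    rw [mul_pow, hμK, hv2]
    ring
  have T3 : trN m (a * (y * v)) = trM m ((a * v + a ^ 2 ^ m * v⁻¹) * y) := by
    rw [trN_eq]
    congr 1
    have : (a * (y * v)) ^ 2 ^ m = a ^ 2 ^ m * (y * v⁻¹) := by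
      rw [mul_pow, epow]
    rw [this]
    ring
  rw [T1, T2, T3]
  -- reassociate and split
  have hsplit2 : trM m y + trM m (μ * (v ^ 2 + (v ^ 2)⁻¹)) +
        trM m ((a * v + a ^ 2 ^ m * v⁻¹) * y)
      = trM m (μ * (v ^ 2 + (v ^ 2)⁻¹)) +
        trM m ((1 + (a * v + a ^ 2 ^ m * v⁻¹)) * y) := by
    have : (1 + (a * v + a ^ 2 ^ m * v⁻¹)) * y
        = y + (a * v + a ^ 2 ^ m * v⁻¹) * y := by ring
    rw [this, trM_add]
    ring
  rw [hsplit2]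
  -- apply eps_add
  have haq2 : (a ^ 2 ^ m) ^ 2 ^ m = a := pow_pow_fix hcard a
  have harg1 : (μ * (v ^ 2 + (v ^ 2)⁻¹)) ^ 2 ^ m = μ * (v ^ 2 + (v ^ 2)⁻¹) := by
    have hv2 : (v ^ 2) ^ 2 ^ m = (v ^ 2)⁻¹ := by
      rw [← pow_mul, mul_comm, pow_mul, hvq, inv_pow]
    have hv2' : ((v ^ 2)⁻¹) ^ 2 ^ m = v ^ 2 := by
      rw [inv_pow, hv2, inv_inv]
    rw [mul_pow, hμK, add_pow_char_pow _ _ 2 m, hv2, hv2']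
    ring
  have harg2 : ((1 + (a * v + a ^ 2 ^ m * v⁻¹)) * y) ^ 2 ^ m
      = (1 + (a * v + a ^ 2 ^ m * v⁻¹)) * y := by
    rw [mul_pow, hyK, add_pow_char_pow _ _ 2 m, one_pow, add_pow_char_pow _ _ 2 m,
      mul_pow, mul_pow, hvq, hinvq, haq2]
    ring
  exact eps_add (trM_is01 harg1) (trM_is01 harg2)

end Main

section Sqrt
variable {F : Type*} [Field F] [DecidableEq F] [Fintype F] [CharP F 2] {m : ℕ}

lemma normK (hcard : Fintype.card F = 2 ^ (2 * m)) (x : F) :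
    (x ^ (2 ^ m + 1)) ^ 2 ^ m = x ^ (2 ^ m + 1) := by
  rw [← pow_mul]
  have h1 : (2 ^ m + 1) * 2 ^ m = 2 ^ (2 * m) + 2 ^ m := by
    rw [add_mul, one_mul, ← pow_add, two_mul]
  rw [h1, pow_add, pow_card_fix hcard, pow_succ, mul_comm]

lemma sqrt_sq (hm : 0 < m) {c : F} (hc : c ^ 2 ^ m = c) : (c ^ 2 ^ (m - 1)) ^ 2 = c := by
  rw [← pow_mul]
  have : 2 ^ (m - 1) * 2 = 2 ^ m := by
    rw [← pow_succ]
    congr 1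
    omega
  rw [this, hc]

lemma sqrt_K {c : F} (hc : c ^ 2 ^ m = c) : (c ^ 2 ^ (m - 1)) ^ 2 ^ m = c ^ 2 ^ (m - 1) := by
  rw [← pow_mul, mul_comm, pow_mul, hc]

end Sqrt

theorem stmt7 (m : ℕ) (hm : 0 < m) (F : Type*) [Field F] [Fintype F] [DecidableEq F]
    (hcard : Fintype.card F = 2 ^ (2 * m))
    (l : F) (hl : l + l ^ (2 ^ m) = 1)
    (μ : F) (hμK : μ ^ (2 ^ m) = μ) (hμ0 : μ ≠ 0)
    (a : F) (ha : a ≠ 0) (haTr : trM m (a * a ^ (2 ^ m)) = 0) :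
    ∑ x : F, eps (trN m (l * x ^ (2 ^ m + 1)) + trN m (μ * x ^ (2 ^ m - 1)) +
      trN m (a * x)) = 1 + klooM m μ := by
  -- characteristic 2
  haveI : CharP F (ringChar F) := ringChar.charP F
  have hprime : Nat.Prime (ringChar F) := CharP.char_is_prime F (ringChar F)
  haveI : Fact (Nat.Prime (ringChar F)) := ⟨hprime⟩
  obtain ⟨n, hn⟩ := FiniteField.card F (ringChar F)
  have hch2 : ringChar F = 2 := by
    have hdvd : ringChar F ∣ 2 ^ (2 * m) := by
      rw [← hcard, hn.2]
      exact dvd_pow_self _ (by positivity)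
    have := Nat.Prime.dvd_of_dvd_pow hprime hdvd
    exact (Nat.prime_dvd_prime_iff_eq hprime Nat.prime_two).1 this
  haveI hC2 : CharP F 2 := hch2 ▸ ringChar.charP F
  haveI : Fact (Nat.Prime 2) := ⟨Nat.prime_two⟩
  have hq2 := pow_card_fix hcard (F := F)
  have h2m2 : (2:ℕ) ≤ 2 ^ m := by
    calc (2:ℕ) = 2 ^ 1 := rfl
      _ ≤ 2 ^ m := Nat.pow_le_pow_right (by norm_num) hm
  -- the x = 0 term
  have htrN0 : trN m (0 : F) = 0 := by rw [trN_eq_trM2]; exact trM_zero _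
  have hterm0 : eps (trN m (l * (0:F) ^ (2 ^ m + 1)) + trN m (μ * (0:F) ^ (2 ^ m - 1)) +
      trN m (a * (0:F))) = 1 := by
    rw [zero_pow (by positivity : 2 ^ m + 1 ≠ 0), zero_pow (by omega : 2 ^ m - 1 ≠ 0),
      mul_zero, mul_zero, mul_zero, htrN0, add_zero, add_zero, eps_zero]
  -- the product reindexing
  have hstepB : ∑ p ∈ (Finset.univ.filter (fun v : F => v ^ (2 ^ m + 1) = 1)) ×ˢ
      (Finset.univ.filter (fun y : F => y ^ 2 ^ m = y ∧ y ≠ 0)),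
      eps (trN m (l * (p.2 * p.1) ^ (2 ^ m + 1)) + trN m (μ * (p.2 * p.1) ^ (2 ^ m - 1)) +
        trN m (a * (p.2 * p.1)))
      = ∑ x ∈ Finset.univ.erase (0:F),
        eps (trN m (l * x ^ (2 ^ m + 1)) + trN m (μ * x ^ (2 ^ m - 1)) + trN m (a * x)) := by
    refine Finset.sum_nbij' (fun p => p.2 * p.1)
      (fun x => (x * ((x ^ (2 ^ m + 1)) ^ 2 ^ (m - 1))⁻¹, (x ^ (2 ^ m + 1)) ^ 2 ^ (m - 1)))
      ?_ ?_ ?_ ?_ ?_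
    · intro p hp
      rw [Finset.mem_product, Finset.mem_filter, Finset.mem_filter] at hp
      obtain ⟨⟨_, hU⟩, _, hK, h0⟩ := hp
      exact Finset.mem_erase.2 ⟨mul_ne_zero h0 (U_ne_zero hU), Finset.mem_univ _⟩
    · intro x hx
      have hx0 : x ≠ 0 := (Finset.mem_erase.1 hx).1
      have hc0 : x ^ (2 ^ m + 1) ≠ 0 := pow_ne_zero _ hx0
      have hcK := normK hcard x
      have hy2 := sqrt_sq hm hcK
      have hyK := sqrt_K hcK
      have hy0 : (x ^ (2 ^ m + 1)) ^ 2 ^ (m - 1) ≠ 0 := pow_ne_zero _ hc0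
      have hyq1 : ((x ^ (2 ^ m + 1)) ^ 2 ^ (m - 1)) ^ (2 ^ m + 1) = x ^ (2 ^ m + 1) := by
        rw [pow_succ, hyK, ← sq, hy2]
      refine Finset.mem_product.2 ⟨Finset.mem_filter.2 ⟨Finset.mem_univ _, ?_⟩,
        Finset.mem_filter.2 ⟨Finset.mem_univ _, hyK, hy0⟩⟩
      dsimp only
      rw [mul_pow, inv_pow, hyq1, mul_inv_cancel₀ hc0]
    · intro p hp
      rw [Finset.mem_product, Finset.mem_filter, Finset.mem_filter] at hp
      obtain ⟨⟨_, hU⟩, _, hK, h0⟩ := hp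
      have hXq : (p.2 * p.1) ^ (2 ^ m + 1) = p.2 ^ 2 := by
        rw [mul_pow, hU, mul_one, pow_succ, hK, ← sq]
      have hY : ((p.2 * p.1) ^ (2 ^ m + 1)) ^ 2 ^ (m - 1) = p.2 := by
        rw [hXq, ← pow_mul]
        rw [show 2 * 2 ^ (m - 1) = 2 ^ m from by
          rw [← pow_succ']; congr 1; omega]
        exact hK
      rw [hY]
      have hfst : p.2 * p.1 * p.2⁻¹ = p.1 := by
        rw [mul_comm p.2 p.1, mul_assoc, mul_inv_cancel₀ h0, mul_one]
      rw [hfst]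
    · intro x hx
      have hx0 : x ≠ 0 := (Finset.mem_erase.1 hx).1
      have hy0 : (x ^ (2 ^ m + 1)) ^ 2 ^ (m - 1) ≠ 0 := pow_ne_zero _ (pow_ne_zero _ hx0)
      dsimp only
      rw [mul_comm x _, ← mul_assoc, mul_inv_cancel₀ hy0, one_mul]
    · intro p _
      rfl
  -- factor the summand over the product set
  have hpointP : ∀ p ∈ (Finset.univ.filter (fun v : F => v ^ (2 ^ m + 1) = 1)) ×ˢ
      (Finset.univ.filter (fun y : F => y ^ 2 ^ m = y ∧ y ≠ 0)),
      eps (trN m (l * (p.2 * p.1) ^ (2 ^ m + 1)) + trN m (μ * (p.2 * p.1) ^ (2 ^ m - 1)) +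
        trN m (a * (p.2 * p.1)))
      = eps (trM m (μ * (p.1 ^ 2 + (p.1 ^ 2)⁻¹))) *
        eps (trM m ((1 + (a * p.1 + a ^ 2 ^ m * p.1⁻¹)) * p.2)) := by
    intro p hp
    rw [Finset.mem_product, Finset.mem_filter, Finset.mem_filter] at hp
    obtain ⟨⟨_, hU⟩, _, hK, h0⟩ := hp
    exact point_eq hm hcard hl hμK hU hK h0
  -- inner sum over y
  have hvsum : ∀ v ∈ Finset.univ.filter (fun v : F => v ^ (2 ^ m + 1) = 1),
      ∑ y ∈ Finset.univ.filter (fun y : F => y ^ 2 ^ m = y ∧ y ≠ 0),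
        eps (trM m (μ * (v ^ 2 + (v ^ 2)⁻¹))) *
          eps (trM m ((1 + (a * v + a ^ 2 ^ m * v⁻¹)) * y))
      = - eps (trM m (μ * (v ^ 2 + (v ^ 2)⁻¹))) := by
    intro v hv
    rw [Finset.mem_filter] at hv
    have hU := hv.2
    have hvq : v ^ 2 ^ m = v⁻¹ := U_pow_q hU
    have hinvq : (v⁻¹) ^ 2 ^ m = v := by rw [inv_pow, hvq, inv_inv]
    have hcK : (1 + (a * v + a ^ 2 ^ m * v⁻¹)) ^ 2 ^ m
        = 1 + (a * v + a ^ 2 ^ m * v⁻¹) := by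
      rw [add_pow_char_pow _ _ 2 m, one_pow, add_pow_char_pow _ _ 2 m,
        mul_pow, mul_pow, hvq, hinvq, pow_pow_fix hcard a]
      ring
    have hc0 : 1 + (a * v + a ^ 2 ^ m * v⁻¹) ≠ 0 :=
      d_ne_zero hm ha (pow_pow_fix hcard a) haTr hU
    rw [← Finset.mul_sum, charsum' hm hcard hcK hc0, mul_neg_one]
  -- squaring bijection on U
  have hsq : ∑ v ∈ Finset.univ.filter (fun v : F => v ^ (2 ^ m + 1) = 1),
      eps (trM m (μ * (v ^ 2 + (v ^ 2)⁻¹)))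
      = ∑ u ∈ Finset.univ.filter (fun v : F => v ^ (2 ^ m + 1) = 1),
        eps (trM m (μ * (u + u⁻¹))) := by
    refine Finset.sum_nbij' (fun v => v ^ 2) (fun u => u ^ 2 ^ (2 * m - 1)) ?_ ?_ ?_ ?_ ?_
    · intro v hv
      rw [Finset.mem_filter] at *
      refine ⟨Finset.mem_univ _, ?_⟩
      rw [← pow_mul, mul_comm 2 (2 ^ m + 1), pow_mul, hv.2, one_pow]
    · intro u hu
      rw [Finset.mem_filter] at *
      refine ⟨Finset.mem_univ _, ?_⟩
      rw [← pow_mul, mul_comm, pow_mul, hu.2, one_pow]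
    · intro v _
      rw [← pow_mul]
      rw [show 2 * 2 ^ (2 * m - 1) = 2 ^ (2 * m) from by
        rw [← pow_succ']; congr 1; omega]
      exact hq2 v
    · intro u _
      rw [← pow_mul]
      rw [show 2 ^ (2 * m - 1) * 2 = 2 ^ (2 * m) from by
        rw [← pow_succ]; congr 1; omega]
      exact hq2 u
    · intro v _
      rfl
  -- the product-set sum equals the Kloosterman sum
  have hPsum : ∑ p ∈ (Finset.univ.filter (fun v : F => v ^ (2 ^ m + 1) = 1)) ×ˢ
      (Finset.univ.filter (fun y : F => y ^ 2 ^ m = y ∧ y ≠ 0)),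
      eps (trN m (l * (p.2 * p.1) ^ (2 ^ m + 1)) + trN m (μ * (p.2 * p.1) ^ (2 ^ m - 1)) +
        trN m (a * (p.2 * p.1)))
      = klooM m μ := by
    calc ∑ p ∈ (Finset.univ.filter (fun v : F => v ^ (2 ^ m + 1) = 1)) ×ˢ
        (Finset.univ.filter (fun y : F => y ^ 2 ^ m = y ∧ y ≠ 0)),
        eps (trN m (l * (p.2 * p.1) ^ (2 ^ m + 1)) + trN m (μ * (p.2 * p.1) ^ (2 ^ m - 1)) +
          trN m (a * (p.2 * p.1)))
        = ∑ p ∈ (Finset.univ.filter (fun v : F => v ^ (2 ^ m + 1) = 1)) ×ˢ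
          (Finset.univ.filter (fun y : F => y ^ 2 ^ m = y ∧ y ≠ 0)),
          eps (trM m (μ * (p.1 ^ 2 + (p.1 ^ 2)⁻¹))) *
            eps (trM m ((1 + (a * p.1 + a ^ 2 ^ m * p.1⁻¹)) * p.2)) :=
        Finset.sum_congr rfl hpointP
      _ = ∑ v ∈ Finset.univ.filter (fun v : F => v ^ (2 ^ m + 1) = 1),
          ∑ y ∈ Finset.univ.filter (fun y : F => y ^ 2 ^ m = y ∧ y ≠ 0),
            eps (trM m (μ * (v ^ 2 + (v ^ 2)⁻¹))) *
              eps (trM m ((1 + (a * v + a ^ 2 ^ m * v⁻¹)) * y)) :=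
        Finset.sum_product' _ _ (fun v y => eps (trM m (μ * (v ^ 2 + (v ^ 2)⁻¹))) *
          eps (trM m ((1 + (a * v + a ^ 2 ^ m * v⁻¹)) * y)))
      _ = ∑ v ∈ Finset.univ.filter (fun v : F => v ^ (2 ^ m + 1) = 1),
          - eps (trM m (μ * (v ^ 2 + (v ^ 2)⁻¹))) := Finset.sum_congr rfl hvsum
      _ = - ∑ v ∈ Finset.univ.filter (fun v : F => v ^ (2 ^ m + 1) = 1),
          eps (trM m (μ * (v ^ 2 + (v ^ 2)⁻¹))) := Finset.sum_neg_distrib _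
      _ = - ∑ u ∈ Finset.univ.filter (fun v : F => v ^ (2 ^ m + 1) = 1),
          eps (trM m (μ * (u + u⁻¹))) := by rw [hsq]
      _ = - - klooM m μ := by rw [Usum hm hcard hμK hμ0]
      _ = klooM m μ := neg_neg _
  -- final assembly
  calc ∑ x : F, eps (trN m (l * x ^ (2 ^ m + 1)) + trN m (μ * x ^ (2 ^ m - 1)) +
        trN m (a * x))
      = eps (trN m (l * (0:F) ^ (2 ^ m + 1)) + trN m (μ * (0:F) ^ (2 ^ m - 1)) +
          trN m (a * (0:F)))
        + ∑ x ∈ Finset.univ.erase (0:F),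
          eps (trN m (l * x ^ (2 ^ m + 1)) + trN m (μ * x ^ (2 ^ m - 1)) + trN m (a * x)) :=
      (Finset.add_sum_erase _ _ (Finset.mem_univ 0)).symm
    _ = 1 + ∑ x ∈ Finset.univ.erase (0:F),
          eps (trN m (l * x ^ (2 ^ m + 1)) + trN m (μ * x ^ (2 ^ m - 1)) + trN m (a * x)) := by
      rw [hterm0]
    _ = 1 + klooM m μ := by rw [← hstepB, hPsum]
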